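/- With c₁, c₂ > 0, A and B as above, the function z₋(x₁,x₂) = A − √(A²−B) attains its maximum over [0,2π)² at (0,π), and max z₋ = (c₁²+c₂²)/2 + 4 − (|c₁−c₂|/2)·√((c₁+c₂)² + 16). -/

import Mathlib

open Real

noncomputable section

/-- `τ(x) = 1 + e^{ix}`. -/
def tau (x : ℝ) : ℂ := 1 + Complex.exp (x * Complex.I)

/-- `A = (c₁²+c₂²)/2 + |τ(x₁)|² + |τ(x₂)|²`. -/
def Aval (c₁ c₂ x₁ x₂ : ℝ) : ℝ :=
  (c₁ ^ 2 + c₂ ^ 2) / 2 + ‖tau x₁‖ ^ 2 + ‖tau x₂‖ ^ 2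

/-- `B = (|τ(x₂)|² − |τ(x₁)|² − c₁c₂)²`. -/
def Bval (c₁ c₂ x₁ x₂ : ℝ) : ℝ :=
  (‖tau x₂‖ ^ 2 - ‖tau x₁‖ ^ 2 - c₁ * c₂) ^ 2

/-- The lower root `z₋ = A − √(A²−B)`. -/
def zMinus (c₁ c₂ x₁ x₂ : ℝ) : ℝ :=
  Aval c₁ c₂ x₁ x₂ - Real.sqrt (Aval c₁ c₂ x₁ x₂ ^ 2 - Bval c₁ c₂ x₁ x₂)

lemma abs_tau_sq (x : ℝ) : ‖tau x‖ ^ 2 = 2 + 2 * Real.cos x := by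
  rw [← Complex.normSq_eq_norm_sq, tau, Complex.exp_mul_I, ← Complex.ofReal_cos,
    ← Complex.ofReal_sin]
  simp [Complex.normSq_apply, Complex.cos_ofReal_re, Complex.sin_ofReal_re]
  nlinarith [Real.sin_sq_add_cos_sq x]

lemma chord (p u : ℝ) (hp : 0 ≤ p) (hu0 : 0 ≤ u) (hu4 : u ≤ 4) :
    (4 - u) * Real.sqrt p + u * Real.sqrt (p + 8) ≤ 4 * Real.sqrt (p + 2 * u) := by
  set a := Real.sqrt p with ha_def
  set b := Real.sqrt (p + 8) with hb_def
  set r := Real.sqrt (p + 2 * u) with hr_def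
  have ha : 0 ≤ a := Real.sqrt_nonneg _
  have hb : 0 ≤ b := Real.sqrt_nonneg _
  have hr : 0 ≤ r := Real.sqrt_nonneg _
  have ha2 : a ^ 2 = p := Real.sq_sqrt hp
  have hb2 : b ^ 2 = p + 8 := Real.sq_sqrt (by linarith)
  have hr2 : r ^ 2 = p + 2 * u := Real.sq_sqrt (by linarith)
  have hab : a * b ≤ p + 4 := by nlinarith [sq_nonneg (a - b)]
  have h4u : (0:ℝ) ≤ 4 - u := by linarith
  have hL : 0 ≤ (4 - u) * a + u * b := by positivity
  have hsq : ((4 - u) * a + u * b) ^ 2 ≤ (4 * r) ^ 2 := by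
    have e1 : ((4 - u) * a + u * b) ^ 2 =
        (4 - u) ^ 2 * a ^ 2 + u ^ 2 * b ^ 2 + 2 * (u * (4 - u)) * (a * b) := by ring
    rw [ha2, hb2] at e1
    have e2 : (4 * r) ^ 2 = 16 * p + 32 * u := by
      rw [mul_pow, hr2]; ring
    nlinarith [mul_le_mul_of_nonneg_left hab (mul_nonneg hu0 h4u)]
  calc (4 - u) * a + u * b = Real.sqrt (((4 - u) * a + u * b) ^ 2) :=
        (Real.sqrt_sq hL).symm
    _ ≤ Real.sqrt ((4 * r) ^ 2) := Real.sqrt_le_sqrt hsq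
    _ = 4 * r := Real.sqrt_sq (by positivity)

lemma key1D (C p u : ℝ) (hC : 0 ≤ C) (hp : 0 ≤ p) (hu0 : 0 ≤ u) (hu4 : u ≤ 4) :
    u - C * Real.sqrt (p + 2 * u) ≤
      max (0 - C * Real.sqrt p) (4 - C * Real.sqrt (p + 8)) := by
  have hch := chord p u hp hu0 hu4
  set m := max (0 - C * Real.sqrt p) (4 - C * Real.sqrt (p + 8)) with hm
  have h1 : 0 - C * Real.sqrt p ≤ m := le_max_left _ _
  have h2 : 4 - C * Real.sqrt (p + 8) ≤ m := le_max_right _ _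
  have h4u : (0:ℝ) ≤ 4 - u := by linarith
  nlinarith [mul_le_mul_of_nonneg_left hch hC,
    mul_le_mul_of_nonneg_left h1 h4u, mul_le_mul_of_nonneg_left h2 hu0]

lemma main_ineq (p q u v : ℝ) (hq : 0 ≤ q) (hqp : q ≤ p)
    (hu0 : 0 ≤ u) (hu4 : u ≤ 4) (hv0 : 0 ≤ v) (hv4 : v ≤ 4) :
    u + v - Real.sqrt (p + 2 * u) * Real.sqrt (q + 2 * v) ≤
      4 - Real.sqrt (p + 8) * Real.sqrt q := by
  have hp : 0 ≤ p := le_trans hq hqp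
  have ha : 0 ≤ Real.sqrt p := Real.sqrt_nonneg _
  have hb : 0 ≤ Real.sqrt (p + 8) := Real.sqrt_nonneg _
  have hcq : 0 ≤ Real.sqrt q := Real.sqrt_nonneg _
  have hd : 0 ≤ Real.sqrt (q + 8) := Real.sqrt_nonneg _
  have ha2 : Real.sqrt p ^ 2 = p := Real.sq_sqrt hp
  have hb2 : Real.sqrt (p + 8) ^ 2 = p + 8 := Real.sq_sqrt (by linarith)
  have hcq2 : Real.sqrt q ^ 2 = q := Real.sq_sqrt hq
  have hd2 : Real.sqrt (q + 8) ^ 2 = q + 8 := Real.sq_sqrt (by linarith)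
  have hqa : Real.sqrt q ≤ Real.sqrt p := Real.sqrt_le_sqrt hqp
  have hab : Real.sqrt p ≤ Real.sqrt (p + 8) := Real.sqrt_le_sqrt (by linarith)
  have hdb : Real.sqrt (q + 8) ≤ Real.sqrt (p + 8) := Real.sqrt_le_sqrt (by linarith)
  have hqd : Real.sqrt q ≤ Real.sqrt (q + 8) := Real.sqrt_le_sqrt (by linarith)
  -- step in v
  have h1 := key1D (Real.sqrt (p + 2 * u)) q v (Real.sqrt_nonneg _) hq hv0 hv4
  rcases max_choice (0 - Real.sqrt (p + 2 * u) * Real.sqrt q)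
      (4 - Real.sqrt (p + 2 * u) * Real.sqrt (q + 8)) with hmax | hmax <;>
    rw [hmax] at h1
  · -- v-corner is 0 : now step in u with C = √q
    have h2 := key1D (Real.sqrt q) p u hcq hp hu0 hu4
    rcases max_choice (0 - Real.sqrt q * Real.sqrt p)
        (4 - Real.sqrt q * Real.sqrt (p + 8)) with hmax2 | hmax2 <;>
      rw [hmax2] at h2
    · -- corner (0,0): need √q(√(p+8)−√p) ≤ 4
      have hA1 : 0 ≤ Real.sqrt (p + 8) - Real.sqrt p := sub_nonneg.2 hab
      have hA2 : 0 ≤ Real.sqrt p + Real.sqrt (p + 8) - 2 * Real.sqrt q := by linarith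
      have hprod := mul_nonneg hA1 hA2
      have hexp : (Real.sqrt (p + 8) - Real.sqrt p) *
          (Real.sqrt p + Real.sqrt (p + 8) - 2 * Real.sqrt q) =
          Real.sqrt (p + 8) ^ 2 - Real.sqrt p ^ 2 -
            2 * (Real.sqrt (p + 8) * Real.sqrt q - Real.sqrt p * Real.sqrt q) := by ring
      rw [hexp, ha2, hb2] at hprod
      have hc1 : Real.sqrt (p + 2 * u) * Real.sqrt q = Real.sqrt q * Real.sqrt (p + 2 * u) :=
        mul_comm _ _
      have hc2 : Real.sqrt q * Real.sqrt p = Real.sqrt p * Real.sqrt q := mul_comm _ _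
      linarith
    · have hc1 : Real.sqrt (p + 2 * u) * Real.sqrt q = Real.sqrt q * Real.sqrt (p + 2 * u) :=
        mul_comm _ _
      have hc2 : Real.sqrt q * Real.sqrt (p + 8) = Real.sqrt (p + 8) * Real.sqrt q :=
        mul_comm _ _
      linarith
  · -- v-corner is 4 : step in u with C = √(q+8)
    have h2 := key1D (Real.sqrt (q + 8)) p u hd hp hu0 hu4
    rcases max_choice (0 - Real.sqrt (q + 8) * Real.sqrt p)
        (4 - Real.sqrt (q + 8) * Real.sqrt (p + 8)) with hmax2 | hmax2 <;>
      rw [hmax2] at h2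
    · -- corner (0,4): need √(p+8)√q ≤ √p√(q+8)
      have hkey : Real.sqrt (p + 8) * Real.sqrt q ≤ Real.sqrt p * Real.sqrt (q + 8) := by
        rw [← Real.sqrt_mul (by linarith) q, ← Real.sqrt_mul hp (q + 8)]
        exact Real.sqrt_le_sqrt (by nlinarith)
      have hc1 : Real.sqrt (p + 2 * u) * Real.sqrt (q + 8) =
          Real.sqrt (q + 8) * Real.sqrt (p + 2 * u) := mul_comm _ _
      have hc2 : Real.sqrt (q + 8) * Real.sqrt p = Real.sqrt p * Real.sqrt (q + 8) :=
        mul_comm _ _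
      linarith
    · -- corner (4,4): need 4 ≤ √(p+8)(√(q+8)−√q)
      have hA1 : 0 ≤ Real.sqrt (q + 8) - Real.sqrt q := sub_nonneg.2 hqd
      have hA2 : 0 ≤ 2 * Real.sqrt (p + 8) - Real.sqrt (q + 8) - Real.sqrt q := by linarith
      have hprod := mul_nonneg hA1 hA2
      have hexp : (Real.sqrt (q + 8) - Real.sqrt q) *
          (2 * Real.sqrt (p + 8) - Real.sqrt (q + 8) - Real.sqrt q) =
          2 * (Real.sqrt (p + 8) * Real.sqrt (q + 8) - Real.sqrt (p + 8) * Real.sqrt q) -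
            (Real.sqrt (q + 8) ^ 2 - Real.sqrt q ^ 2) := by ring
      rw [hexp, hd2, hcq2] at hprod
      have hc1 : Real.sqrt (p + 2 * u) * Real.sqrt (q + 8) =
          Real.sqrt (q + 8) * Real.sqrt (p + 2 * u) := mul_comm _ _
      have hc2 : Real.sqrt (q + 8) * Real.sqrt (p + 8) =
          Real.sqrt (p + 8) * Real.sqrt (q + 8) := mul_comm _ _
      linarith

lemma zMinus_eq (c₁ c₂ x₁ x₂ : ℝ) :
    zMinus c₁ c₂ x₁ x₂ = (c₁ ^ 2 + c₂ ^ 2) / 2 + (2 + 2 * Real.cos x₁) + (2 + 2 * Real.cos x₂)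
      - Real.sqrt ((c₁ + c₂) ^ 2 / 2 + 2 * (2 + 2 * Real.cos x₁)) *
        Real.sqrt ((c₁ - c₂) ^ 2 / 2 + 2 * (2 + 2 * Real.cos x₂)) := by
  have h1 := Real.neg_one_le_cos x₁
  have h2 := Real.neg_one_le_cos x₂
  have hA : Aval c₁ c₂ x₁ x₂ =
      (c₁ ^ 2 + c₂ ^ 2) / 2 + (2 + 2 * Real.cos x₁) + (2 + 2 * Real.cos x₂) := by
    rw [Aval, abs_tau_sq, abs_tau_sq]
  have hfac : Aval c₁ c₂ x₁ x₂ ^ 2 - Bval c₁ c₂ x₁ x₂ =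
      ((c₁ + c₂) ^ 2 / 2 + 2 * (2 + 2 * Real.cos x₁)) *
      ((c₁ - c₂) ^ 2 / 2 + 2 * (2 + 2 * Real.cos x₂)) := by
    rw [Aval, Bval, abs_tau_sq, abs_tau_sq]; ring
  rw [zMinus, hfac, hA, Real.sqrt_mul (by nlinarith [sq_nonneg (c₁ + c₂)])]

/-- `z₋` attains its maximum over the torus at `(0, π)`, where it equals
`(c₁²+c₂²)/2 + 4 − (|c₁−c₂|/2)·√((c₁+c₂)² + 16)`. -/
theorem max_zMinus (c₁ c₂ : ℝ) (hc₁ : 0 < c₁) (hc₂ : 0 < c₂) :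
    (∀ x₁ ∈ Set.Ico (0 : ℝ) (2 * π), ∀ x₂ ∈ Set.Ico (0 : ℝ) (2 * π),
        zMinus c₁ c₂ x₁ x₂ ≤ zMinus c₁ c₂ 0 π) ∧
    zMinus c₁ c₂ 0 π =
      (c₁ ^ 2 + c₂ ^ 2) / 2 + 4 - (|c₁ - c₂| / 2) * Real.sqrt ((c₁ + c₂) ^ 2 + 16) := by
  have hq : (0:ℝ) ≤ (c₁ - c₂) ^ 2 / 2 := by positivity
  have hqp : (c₁ - c₂) ^ 2 / 2 ≤ (c₁ + c₂) ^ 2 / 2 := by nlinarith [mul_pos hc₁ hc₂]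
  have hzero : zMinus c₁ c₂ 0 π = (c₁ ^ 2 + c₂ ^ 2) / 2 + 4 -
      Real.sqrt ((c₁ + c₂) ^ 2 / 2 + 8) * Real.sqrt ((c₁ - c₂) ^ 2 / 2) := by
    rw [zMinus_eq, Real.cos_zero, Real.cos_pi]
    norm_num
  constructor
  · intro x₁ _ x₂ _
    rw [zMinus_eq, hzero]
    have h1 := Real.neg_one_le_cos x₁
    have h1' := Real.cos_le_one x₁
    have h2 := Real.neg_one_le_cos x₂
    have h2' := Real.cos_le_one x₂
    have := main_ineq ((c₁ + c₂) ^ 2 / 2) ((c₁ - c₂) ^ 2 / 2)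
      (2 + 2 * Real.cos x₁) (2 + 2 * Real.cos x₂) hq hqp
      (by linarith) (by linarith) (by linarith) (by linarith)
    have hrw : (c₁ + c₂) ^ 2 / 2 + 8 = (c₁ + c₂) ^ 2 / 2 + 8 := rfl
    nlinarith [this]
  · rw [hzero]
    have hY : 0 ≤ |c₁ - c₂| / 2 * Real.sqrt ((c₁ + c₂) ^ 2 + 16) := by positivity
    have : Real.sqrt ((c₁ + c₂) ^ 2 / 2 + 8) * Real.sqrt ((c₁ - c₂) ^ 2 / 2) =
        |c₁ - c₂| / 2 * Real.sqrt ((c₁ + c₂) ^ 2 + 16) := by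
      rw [← Real.sqrt_mul (by positivity)]
      rw [show ((c₁ + c₂) ^ 2 / 2 + 8) * ((c₁ - c₂) ^ 2 / 2) =
          (|c₁ - c₂| / 2 * Real.sqrt ((c₁ + c₂) ^ 2 + 16)) ^ 2 by
        rw [mul_pow, div_pow, sq_abs, Real.sq_sqrt (by positivity)]; ring]
      exact Real.sqrt_sq hY
    rw [this]

end
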